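/- Uniqueness of rational functions from power sums: if R₁ and R₂ are rational functions in one complex variable, both monic quotients of monic polynomials, such that for every k ∈ ℕ the sum of the k-th powers of the zeros of R₁ (with multiplicity) minus the sum of the k-th powers of its poles equals the corresponding quantity for R₂, and the zeros and poles of both lie in a common disk, then R₁ = R₂. -/

import Mathlib

open Polynomial

private lemma sum_indicator (a : ℂ) (s : Multiset ℂ) :
    (s.map (fun z => if z = a then (1:ℂ) else 0)).sum = s.count a := by
  induction s using Multiset.induction_on with
  | empty => simp
  | cons x s ih =>
    simp only [Multiset.map_cons, Multiset.sum_cons, ih, Multiset.count_cons]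
    by_cases h : x = a
    · simp [h, add_comm]
    · simp [h, Ne.symm h]

private lemma multiset_eq_of_powsums (s t : Multiset ℂ)
    (h : ∀ k : ℕ, (s.map (· ^ k)).sum = (t.map (· ^ k)).sum) : s = t := by
  have hpoly : ∀ f : Polynomial ℂ, (s.map f.eval).sum = (t.map f.eval).sum := by
    intro f
    induction f using Polynomial.induction_on' with
    | add p q hp hq =>
      simp only [eval_add]
      rw [Multiset.sum_map_add, Multiset.sum_map_add, hp, hq]
    | monomial n c =>
      simp only [eval_monomial]
      rw [show (s.map fun z => c * z ^ n) = s.map ((c * ·) ∘ (· ^ n)) from rfl,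
        show (t.map fun z => c * z ^ n) = t.map ((c * ·) ∘ (· ^ n)) from rfl,
        ← Multiset.map_map, ← Multiset.map_map, Multiset.sum_map_mul_left,
        Multiset.sum_map_mul_left]
      simp only [Multiset.map_id']
      rw [h n]
  ext a
  by_cases ha : a ∈ s + t
  · set T : Finset ℂ := (s + t).toFinset with hT
    have haT : a ∈ T := by simpa [hT] using ha
    set g : Polynomial ℂ := ∏ b ∈ T.erase a, (X - C b) with hg
    have hga : g.eval a ≠ 0 := by
      simp only [hg, eval_prod, eval_sub, eval_X, eval_C, Finset.prod_ne_zero_iff]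
      intro b hb
      have := Finset.ne_of_mem_erase hb
      intro hcontra
      exact this (by linear_combination -hcontra)
    set f : Polynomial ℂ := C (g.eval a)⁻¹ * g with hf
    have hfval : ∀ z ∈ T, f.eval z = if z = a then (1:ℂ) else 0 := by
      intro z hz
      by_cases hza : z = a
      · simp [hf, hza, inv_mul_cancel₀ hga]
      · simp only [hza, if_neg, hf, eval_mul, eval_C]
        have : g.eval z = 0 := by
          simp only [hg, eval_prod, eval_sub, eval_X, eval_C]
          exact Finset.prod_eq_zero (Finset.mem_erase.2 ⟨hza, hz⟩) (by ring)
        simp [this]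
    have key := hpoly f
    have hs : s.map f.eval = s.map (fun z => if z = a then (1:ℂ) else 0) :=
      Multiset.map_congr rfl (fun z hz => hfval z (by simp [hT, Multiset.mem_add, hz]))
    have ht : t.map f.eval = t.map (fun z => if z = a then (1:ℂ) else 0) :=
      Multiset.map_congr rfl (fun z hz => hfval z (by simp [hT, Multiset.mem_add, hz]))
    rw [hs, ht, sum_indicator, sum_indicator] at key
    exact_mod_cast key
  · rw [Multiset.mem_add] at ha
    push_neg at ha
    rw [Multiset.count_eq_zero_of_notMem ha.1, Multiset.count_eq_zero_of_notMem ha.2]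

/-- **Uniqueness of monic rational functions from power sums of zeros and poles.**
If `P₁/Q₁` and `P₂/Q₂` are quotients of monic coprime polynomials over `ℂ`, all of
whose roots lie in a common disk `{|z| < R}`, and if for every `k ∈ ℕ` (including
`k = 0`) the sum of the `k`-th powers of the zeros (with multiplicity) minus that
of the poles agree, then `P₁ = P₂` and `Q₁ = Q₂`. -/
theorem stmt7 (R : ℝ) (P₁ Q₁ P₂ Q₂ : Polynomial ℂ)
    (h₁ : P₁.Monic) (h₂ : Q₁.Monic) (h₃ : P₂.Monic) (h₄ : Q₂.Monic)
    (hc₁ : IsCoprime P₁ Q₁) (hc₂ : IsCoprime P₂ Q₂)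
    (hroots : ∀ z : ℂ, (P₁.IsRoot z ∨ Q₁.IsRoot z ∨ P₂.IsRoot z ∨ Q₂.IsRoot z) →
      ‖z‖ < R)
    (hpow : ∀ k : ℕ,
      (P₁.roots.map (· ^ k)).sum - (Q₁.roots.map (· ^ k)).sum =
      (P₂.roots.map (· ^ k)).sum - (Q₂.roots.map (· ^ k)).sum) :
    P₁ = P₂ ∧ Q₁ = Q₂ := by
  have hroots_eq : P₁.roots + Q₂.roots = P₂.roots + Q₁.roots := by
    apply multiset_eq_of_powsums
    intro k
    rw [Multiset.map_add, Multiset.map_add, Multiset.sum_add, Multiset.sum_add]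
    linear_combination hpow k
  have hfac : ∀ p : Polynomial ℂ, p.Monic → p = (p.roots.map fun a => X - C a).prod :=
    fun p hp => (IsAlgClosed.splits p).eq_prod_roots_of_monic hp
  have hmul : P₁ * Q₂ = P₂ * Q₁ := by
    rw [hfac P₁ h₁, hfac Q₂ h₄, hfac P₂ h₃, hfac Q₁ h₂, ← Multiset.prod_add,
      ← Multiset.prod_add, ← Multiset.map_add, ← Multiset.map_add, hroots_eq]
  have hd₁ : P₁ ∣ P₂ := hc₁.dvd_of_dvd_mul_right ⟨Q₂, hmul.symm ▸ rfl⟩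
  have hd₂ : P₂ ∣ P₁ := hc₂.dvd_of_dvd_mul_right ⟨Q₁, hmul ▸ rfl⟩
  have hP : P₁ = P₂ := eq_of_monic_of_associated h₁ h₃ (associated_of_dvd_dvd hd₁ hd₂)
  refine ⟨hP, ?_⟩
  have : P₁ * Q₂ = P₁ * Q₁ := by rw [hmul, hP]
  exact (mul_left_cancel₀ h₁.ne_zero this).symm
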